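/- For all natural n ≥ 1, ỹ_n ≤ c and ỹ_{n+1} ∈ [c/2, (5c-2)/2]. -/
import Mathlib


noncomputable def c : ℝ := 4 / (9 - Real.sqrt 5)
noncomputable def φ : ℝ := (1 + Real.sqrt 5) / 2

theorem stmt9 (y : ℕ → ℝ) (h1 : y 1 = c) (h2 : y 2 = c / 2)
    (hrec : ∀ n : ℕ, 1 ≤ n →
      2 * y (n + 1) = 2 * y n + c * (-1 : ℝ) ^ n * φ ^ ((1 : ℤ) - (n : ℤ)))
    (n : ℕ) (hn : 1 ≤ n) :
    y n ≤ c ∧ y (n + 1) ∈ Set.Icc (c / 2) ((5 * c - 2) / 2) := by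
  set s : ℝ := Real.sqrt 5 with hsdef
  have hs : s ^ 2 = 5 := Real.sq_sqrt (by norm_num)
  have hs0 : 0 ≤ s := Real.sqrt_nonneg 5
  have hs2 : 2 < s := by nlinarith
  have hs3 : s < 3 := by nlinarith
  set t : ℝ := (s - 1) / 2 with htdef
  have ht0 : 0 < t := by rw [htdef]; linarith
  have ht1 : t < 1 := by rw [htdef]; linarith
  have hφpos : 0 < φ := by unfold φ; linarith
  have hφne : φ ≠ 0 := ne_of_gt hφpos
  have hinv : φ⁻¹ = t := by
    apply inv_eq_of_mul_eq_one_right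
    show (1 + s) / 2 * ((s - 1) / 2) = 1
    nlinarith
  have hφ1t : φ = 1 + t := by
    show (1 + s) / 2 = 1 + (s - 1) / 2
    ring
  have ht2 : t ^ 2 = 1 - t := by
    have h : t ^ 2 - (1 - t) = (s ^ 2 - 5) / 4 := by rw [htdef]; ring
    linarith [h, hs.le, hs.ge]
  have ht3 : t ^ 3 = 2 * t - 1 := by linear_combination (t - 1) * ht2
  have hcpos : 0 < c := by
    unfold c
    exact div_pos (by norm_num) (by linarith)
  have hc4t : c * (4 - t) = 2 := by
    unfold c
    rw [div_mul_eq_mul_div, div_eq_iff (by intro h; rw [sub_eq_zero] at h; linarith [h.symm] : (9 : ℝ) - s ≠ 0)]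
    rw [htdef]; ring
  -- closed form
  have hcf : ∀ m : ℕ, 1 ≤ m → y m = c - c / 2 * t - c / 2 * (-t) ^ m := by
    intro m hm
    induction m, hm using Nat.le_induction with
    | base => rw [h1]; ring
    | succ k hk ih =>
      have hpow : φ ^ ((1 : ℤ) - (k : ℤ)) = φ * t ^ k := by
        rw [zpow_sub₀ hφne, zpow_one, zpow_natCast, div_eq_mul_inv, ← inv_pow, hinv]
      have heq := hrec k hk
      rw [hpow, ih, hφ1t] at heq
      have e1 : (-t) ^ (k + 1) = (-1 : ℝ) ^ k * t ^ k * (-t) := by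
        rw [pow_succ, neg_pow]
      have e2 : (-t) ^ k = (-1 : ℝ) ^ k * t ^ k := by rw [neg_pow]
      rw [e2] at heq
      rw [e1]
      linear_combination heq / 2
  have hyn := hcf n hn
  have hyn1 := hcf (n + 1) (by omega)
  -- bounds on the oscillating term
  have habs : ∀ m : ℕ, |(-t) ^ m| = t ^ m := by
    intro m
    rw [abs_pow, abs_neg, abs_of_pos ht0]
  constructor
  · -- y n ≤ c
    have h1' : -t ≤ (-t) ^ n := by
      have := (abs_le.mp (le_of_eq (habs n))).1
      have htn : t ^ n ≤ t := by
        calc t ^ n ≤ t ^ 1 := pow_le_pow_of_le_one ht0.le ht1.le hn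
          _ = t := pow_one t
      have := neg_abs_le ((-t) ^ n)
      rw [habs n] at this
      linarith
    rw [hyn]
    nlinarith [mul_nonneg hcpos.le (by linarith : (0 : ℝ) ≤ (-t) ^ n + t)]
  constructor
  · -- c / 2 ≤ y (n+1)
    have hub : (-t) ^ (n + 1) ≤ t ^ 2 := by
      have := le_abs_self ((-t) ^ (n + 1))
      rw [habs (n + 1)] at this
      have htn : t ^ (n + 1) ≤ t ^ 2 := pow_le_pow_of_le_one ht0.le ht1.le (by omega)
      linarith
    rw [hyn1]
    nlinarith [mul_nonneg hcpos.le (by linarith : (0 : ℝ) ≤ t ^ 2 - (-t) ^ (n + 1))]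
  · -- y (n+1) ≤ (5c - 2)/2
    have hlb : -(t ^ 3) ≤ (-t) ^ (n + 1) := by
      rcases Nat.even_or_odd n with he | ho
      · have hodd : Odd (n + 1) := Even.add_one he
        rw [hodd.neg_pow]
        have hn2 : 2 ≤ n := by
          rcases he with ⟨j, hj⟩
          omega
        have : t ^ (n + 1) ≤ t ^ 3 := pow_le_pow_of_le_one ht0.le ht1.le (by omega)
        linarith
      · have heven : Even (n + 1) := Odd.add_one ho
        rw [heven.neg_pow]
        have : 0 < t ^ (n + 1) := pow_pos ht0 _
        have : 0 < t ^ 3 := pow_pos ht0 _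
        linarith
    rw [hyn1]
    nlinarith [mul_nonneg hcpos.le (by linarith : (0 : ℝ) ≤ (-t) ^ (n + 1) + t ^ 3), hc4t, ht3]
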